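/- arXiv:1604.07916 — 3 statements merged into one kernel-verified Lean document; each statement's English description precedes it below -/
import Mathlib

section
/- Let b ∈ ℝ^N be a vector with all entries nonzero, and let B₀ = b bᵀ be its rank-one Gram matrix (entries (B₀)_{ij} = b_i b_j). Let Λ_k = diag(1/(γ_k − λ_i))_{1≤i≤N} for k = 1,...,N, where λ_1 < ... < λ_N < γ_1 < ... < γ_N are reals, and set B_k = Λ_k B₀ Λ_k. Then each B_k is symmetric positive semidefinite and the sum B_1 + B_2 + ... + B_N is symmetric positive definite, hence invertible. -/
open Matrix

open Polynomial in
/-- Injectivity of the Cauchy-type system: if `∑ i, y i / (gam k - lam i) = 0`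
for all `k`, with `lam`, `gam` injective and all denominators nonzero, then `y = 0`. -/
lemma cauchy_system_eq_zero {N : ℕ} (lam gam : Fin N → ℝ)
    (hlam : Function.Injective lam) (hgam : Function.Injective gam)
    (hne : ∀ i k : Fin N, gam k - lam i ≠ 0) (y : Fin N → ℝ)
    (h : ∀ k, ∑ i, y i / (gam k - lam i) = 0) : y = 0 := by
  classical
  rcases Nat.eq_zero_or_pos N with hN | hN
  · subst hN; exact Subsingleton.elim y 0
  set p : ℝ[X] := ∑ i, C (y i) * ∏ j ∈ Finset.univ.erase i, (X - C (lam j)) with hp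
  have hdeg : p.natDegree < N := by
    have hle : p.natDegree ≤ N - 1 := by
      apply Polynomial.natDegree_sum_le_of_forall_le
      intro i _
      refine (Polynomial.natDegree_C_mul_le _ _).trans ?_
      refine (Polynomial.natDegree_prod_le _ _).trans ?_
      have h1 : ∀ j ∈ Finset.univ.erase i, (X - C (lam j)).natDegree ≤ 1 :=
        fun j _ => le_of_eq (Polynomial.natDegree_X_sub_C _)
      refine le_trans (Finset.sum_le_sum h1) ?_
      simp [Finset.card_erase_of_mem]
    omega
  have heval : ∀ k, p.eval (gam k) = 0 := by
    intro k
    calc p.eval (gam k)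
        = ∑ i, y i * ∏ j ∈ Finset.univ.erase i, (gam k - lam j) := by
          simp [p, Polynomial.eval_finset_sum, Polynomial.eval_prod]
      _ = ∑ i, (y i / (gam k - lam i)) * ∏ j, (gam k - lam j) := by
          refine Finset.sum_congr rfl fun i _ => ?_
          rw [← Finset.mul_prod_erase (Finset.univ) (fun j => gam k - lam j)
            (Finset.mem_univ i), ← mul_assoc, div_mul_cancel₀ _ (hne i k)]
      _ = (∑ i, y i / (gam k - lam i)) * ∏ j, (gam k - lam j) := by
          rw [Finset.sum_mul]
      _ = 0 := by rw [h k, zero_mul]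
  have hp0 : p = 0 := by
    refine Polynomial.eq_zero_of_natDegree_lt_card_of_eval_eq_zero p hgam heval ?_
    simpa using hdeg
  funext i
  have h0 : p.eval (lam i) = y i * ∏ j ∈ Finset.univ.erase i, (lam i - lam j) := by
    simp only [hp, Polynomial.eval_finset_sum, Polynomial.eval_mul, Polynomial.eval_C,
      Polynomial.eval_prod, Polynomial.eval_sub, Polynomial.eval_X]
    rw [Finset.sum_eq_single i]
    · intro i' _ hi'
      have hmem : i ∈ Finset.univ.erase i' := Finset.mem_erase.2 ⟨fun h => hi' h.symm, Finset.mem_univ i⟩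
      rw [Finset.prod_eq_zero hmem (by ring), mul_zero]
    · intro hi; exact absurd (Finset.mem_univ i) hi
  have hprodne : (∏ j ∈ Finset.univ.erase i, (lam i - lam j)) ≠ 0 := by
    refine Finset.prod_ne_zero_iff.2 fun j hj => sub_ne_zero_of_ne fun hij => ?_
    exact (Finset.mem_erase.1 hj).1 (hlam hij.symm)
  have : y i * ∏ j ∈ Finset.univ.erase i, (lam i - lam j) = 0 := by
    rw [← h0, hp0, Polynomial.eval_zero]
  simpa [hprodne] using this

/-- Quadratic form of a rank-one matrix `v vᵀ` is the square of the pairing. -/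
lemma quadForm_vecMulVec {N : ℕ} (v x : Fin N → ℝ) :
    star x ⬝ᵥ (Matrix.vecMulVec v v *ᵥ x) = (∑ i, v i * x i) ^ 2 := by
  simp only [star_trivial, dotProduct, Matrix.mulVec, Matrix.vecMulVec_apply, dotProduct]
  rw [sq, Finset.sum_mul_sum]
  refine Finset.sum_congr rfl fun i _ => ?_
  rw [Finset.mul_sum]
  refine Finset.sum_congr rfl fun j _ => ?_
  ring

lemma sum_mulVec' {ι : Type*} (s : Finset ι) {N : ℕ} (M : ι → Matrix (Fin N) (Fin N) ℝ)
    (x : Fin N → ℝ) : (∑ k ∈ s, M k) *ᵥ x = ∑ k ∈ s, M k *ᵥ x := by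
  ext i
  simp only [Matrix.mulVec, dotProduct, Finset.sum_apply, Matrix.sum_apply, Finset.sum_mul]
  exact Finset.sum_comm

lemma dotProduct_sum' {ι : Type*} (s : Finset ι) {N : ℕ} (x : Fin N → ℝ)
    (f : ι → Fin N → ℝ) : x ⬝ᵥ (∑ k ∈ s, f k) = ∑ k ∈ s, x ⬝ᵥ f k := by
  simp only [dotProduct, Finset.sum_apply, Finset.mul_sum]
  exact Finset.sum_comm

lemma isHermitian_vecMulVec {N : ℕ} (v : Fin N → ℝ) :
    (Matrix.vecMulVec v v).IsHermitian := by
  ext i j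
  simp [Matrix.conjTranspose_apply, Matrix.vecMulVec_apply, mul_comm]

/-- With `b ∈ ℝ^N` having all entries nonzero, `B₀ = b bᵀ`,
`Λ_k = diag (1/(γ_k - λ_i))` and `B_k = Λ_k B₀ Λ_k`, where
`λ₁ < ... < λ_N < γ₁ < ... < γ_N`, each `B_k` is positive semidefinite and
`B₁ + ... + B_N` is positive definite, hence invertible. -/
theorem sum_Bk_posDef (N : ℕ) (lam gam : Fin N → ℝ) (b : Fin N → ℝ)
    (hlam : StrictMono lam) (hgam : StrictMono gam)
    (hsep : ∀ i k : Fin N, lam i < gam k)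
    (hb : ∀ i, b i ≠ 0) :
    (∀ k : Fin N,
      ((Matrix.diagonal fun i => 1 / (gam k - lam i)) * Matrix.vecMulVec b b *
        (Matrix.diagonal fun i => 1 / (gam k - lam i))).PosSemidef) ∧
    (∑ k : Fin N,
      (Matrix.diagonal fun i => 1 / (gam k - lam i)) * Matrix.vecMulVec b b *
        (Matrix.diagonal fun i => 1 / (gam k - lam i))).PosDef ∧
    IsUnit (∑ k : Fin N,
      (Matrix.diagonal fun i => 1 / (gam k - lam i)) * Matrix.vecMulVec b b *
        (Matrix.diagonal fun i => 1 / (gam k - lam i))) := by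
  classical
  have hne : ∀ i k : Fin N, gam k - lam i ≠ 0 := fun i k => sub_ne_zero_of_ne (hsep i k).ne'
  set v : Fin N → Fin N → ℝ := fun k i => b i / (gam k - lam i) with hv
  have hBk : ∀ k : Fin N,
      (Matrix.diagonal fun i => 1 / (gam k - lam i)) * Matrix.vecMulVec b b *
        (Matrix.diagonal fun i => 1 / (gam k - lam i)) = Matrix.vecMulVec (v k) (v k) := by
    intro k
    ext i j
    simp only [Matrix.mul_diagonal, Matrix.diagonal_mul, Matrix.vecMulVec_apply, hv]
    ring
  have hPSD : ∀ k : Fin N, (Matrix.vecMulVec (v k) (v k)).PosSemidef := by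
    intro k
    refine Matrix.posSemidef_iff_dotProduct_mulVec.2 ⟨isHermitian_vecMulVec _, fun x => ?_⟩
    rw [quadForm_vecMulVec]
    positivity
  have hPD : (∑ k : Fin N, Matrix.vecMulVec (v k) (v k)).PosDef := by
    refine Matrix.posDef_iff_dotProduct_mulVec.2 ⟨?_, ?_⟩
    · show _ = _
      rw [Matrix.conjTranspose_sum]
      exact Finset.sum_congr rfl fun k _ => isHermitian_vecMulVec (v k)
    · intro x hx
      have hq : star x ⬝ᵥ ((∑ k : Fin N, Matrix.vecMulVec (v k) (v k)) *ᵥ x)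
          = ∑ k : Fin N, (∑ i, v k i * x i) ^ 2 := by
        rw [sum_mulVec', dotProduct_sum']
        exact Finset.sum_congr rfl fun k _ => quadForm_vecMulVec (v k) x
      rw [hq]
      have hex : ∃ k : Fin N, (∑ i, v k i * x i) ≠ 0 := by
        by_contra hcon
        push_neg at hcon
        have hy : (fun i => b i * x i) = 0 := by
          refine cauchy_system_eq_zero lam gam hlam.injective hgam.injective hne _ fun k => ?_
          rw [← hcon k]
          refine Finset.sum_congr rfl fun i _ => ?_
          simp only [hv]
          ring
        apply hx
        funext i
        have := congrFun hy i
        simp only [Pi.zero_apply] at this ⊢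
        exact (mul_eq_zero.1 this).resolve_left (hb i)
      obtain ⟨k0, hk0⟩ := hex
      exact Finset.sum_pos' (fun k _ => sq_nonneg _)
        ⟨k0, Finset.mem_univ k0, lt_of_le_of_ne (sq_nonneg _) (Ne.symm (pow_ne_zero 2 hk0))⟩
  refine ⟨fun k => (hBk k) ▸ hPSD k, ?_, ?_⟩
  · rw [Finset.sum_congr rfl fun k _ => hBk k]
    exact hPD
  · rw [Finset.sum_congr rfl fun k _ => hBk k]
    exact hPD.isUnit
end

section
/- Under the assumptions of the previous setup, if z ∈ ℝ^N satisfies ⟨B_k z, z⟩ = 0 for all k = 1,...,N (equivalently Σ_i z_i b_i/(γ_k − λ_i) = 0 for all k), then z = 0. -/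
open Matrix Polynomial Finset

/-- If `⟨B_k z, z⟩ = 0` for all `k` (with `B_k = Λ_k b bᵀ Λ_k` as in the setup,
`λ₁ < ... < λ_N < γ₁ < ... < γ_N`, all `b i ≠ 0`), then `z = 0`. -/
theorem Bk_quadratic_forms_vanish_imp_zero (N : ℕ) (lam gam : Fin N → ℝ) (b : Fin N → ℝ)
    (hlam : StrictMono lam) (hgam : StrictMono gam)
    (hsep : ∀ i k : Fin N, lam i < gam k)
    (hb : ∀ i, b i ≠ 0)
    (z : Fin N → ℝ)
    (hz : ∀ k : Fin N,
      dotProduct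
        (((Matrix.diagonal fun i => 1 / (gam k - lam i)) * Matrix.vecMulVec b b *
          (Matrix.diagonal fun i => 1 / (gam k - lam i))) *ᵥ z) z = 0) :
    z = 0 := by
  classical
  rcases Nat.eq_zero_or_pos N with hN | hN
  · subst hN; funext i; exact absurd i.2 (by simp)
  have hne : ∀ i k : Fin N, gam k - lam i ≠ 0 := fun i k =>
    sub_ne_zero.mpr (hsep i k).ne'
  set w : Fin N → ℝ := fun i => b i * z i with hw
  -- Step 1 : the sums vanish
  have hS : ∀ k : Fin N, (∑ i, w i / (gam k - lam i)) = 0 := by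
    intro k
    have h := hz k
    have hexp : dotProduct
        (((Matrix.diagonal fun i => 1 / (gam k - lam i)) * Matrix.vecMulVec b b *
          (Matrix.diagonal fun i => 1 / (gam k - lam i))) *ᵥ z) z
        = (∑ i, w i / (gam k - lam i)) * (∑ i, w i / (gam k - lam i)) := by
      rw [Finset.sum_mul_sum]
      simp only [dotProduct, mulVec, Matrix.mul_apply, vecMulVec_apply, diagonal_apply,
        Finset.sum_mul, Finset.mul_sum]
      rw [Finset.sum_comm]
      refine Finset.sum_congr rfl fun i _ => Finset.sum_congr rfl fun j _ => ?_
      rw [Finset.sum_eq_single i (by intro c _ hc; simp [hc]) (by simp),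
        Finset.sum_eq_single j (by intro c _ hc; simp [Ne.symm hc]) (by simp)]
      simp only [if_pos rfl, ↓reduceIte, hw]
      field_simp
    rw [hexp] at h
    exact mul_self_eq_zero.mp h
  -- Step 2 : the polynomial
  set P : ℝ[X] := ∑ i, Polynomial.C (w i) * ∏ j ∈ Finset.univ.erase i, (X - Polynomial.C (lam j))
    with hP
  have hPdeg : P.natDegree < N := by
    refine lt_of_le_of_lt (Polynomial.natDegree_sum_le_of_forall_le _ _ fun i _ => ?_)
      (Nat.sub_lt hN one_pos)
    refine le_trans (Polynomial.natDegree_C_mul_le _ _) ?_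
    refine le_trans (Polynomial.natDegree_prod_le _ _) ?_
    simp only [Polynomial.natDegree_X_sub_C]
    simp [Finset.card_erase_of_mem]
  have hPeval : ∀ k : Fin N, P.eval (gam k) = 0 := by
    intro k
    have := hS k
    have hQ : (∏ j, (gam k - lam j)) * (∑ i, w i / (gam k - lam i)) = 0 := by
      rw [this, mul_zero]
    rw [Finset.mul_sum] at hQ
    calc P.eval (gam k) = ∑ i, w i * ∏ j ∈ Finset.univ.erase i, (gam k - lam j) := by
          simp [hP, Polynomial.eval_finset_sum, Polynomial.eval_prod]
      _ = ∑ i, (∏ j, (gam k - lam j)) * (w i / (gam k - lam i)) := by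
          refine Finset.sum_congr rfl fun i _ => ?_
          rw [← Finset.mul_prod_erase _ _ (Finset.mem_univ i)]
          rw [mul_comm ((gam k - lam i) * ∏ x ∈ Finset.univ.erase i, (gam k - lam x)),
            div_mul_eq_mul_div, eq_comm, div_eq_iff (hne i k)]
          ring
      _ = 0 := hQ
  have hP0 : P = 0 :=
    Polynomial.eq_zero_of_natDegree_lt_card_of_eval_eq_zero P hgam.injective hPeval
      (by simpa using hPdeg)
  -- Step 3 : evaluate at lam i
  funext i
  have hev : P.eval (lam i) = 0 := by rw [hP0]; simp
  have : P.eval (lam i) = w i * ∏ j ∈ Finset.univ.erase i, (lam i - lam j) := by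
    simp only [hP, Polynomial.eval_finset_sum, Polynomial.eval_mul, Polynomial.eval_C,
      Polynomial.eval_prod, Polynomial.eval_sub, Polynomial.eval_X]
    rw [Finset.sum_eq_single i ?_ (by simp)]
    · intro c _ hc
      rw [Finset.prod_eq_zero (Finset.mem_erase.mpr ⟨hc.symm, Finset.mem_univ i⟩) (by ring),
        mul_zero]
  rw [this] at hev
  have hprod : (∏ j ∈ Finset.univ.erase i, (lam i - lam j)) ≠ 0 := by
    refine Finset.prod_ne_zero_iff.mpr fun j hj => ?_
    exact sub_ne_zero.mpr fun h => (Finset.mem_erase.mp hj).1 (hlam.injective h.symm)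
  have hwz : w i = 0 := by
    rcases mul_eq_zero.mp hev with h | h
    · exact h
    · exact absurd h hprod
  have := mul_eq_zero.mp hwz
  simpa [hb i] using this
end

section
/- Let B be a symmetric positive definite N×N real matrix and let B_2, ..., B_N be symmetric positive semidefinite matrices. Suppose v : [0,∞) → ℝ^N is differentiable and satisfies the ODE v'(t) = −γ_1 v(t) + Σ_{k=2}^N (γ_1 − γ_k) B_k B v(t) where γ_1 < γ_2 < ... < γ_N. Then the function t ↦ |B^{1/2} v(t)|² satisfies d/dt |B^{1/2} v(t)|² ≤ −2γ_1 |B^{1/2} v(t)|², and consequently |B^{1/2} v(t)| ≤ e^{−γ_1 t} |B^{1/2} v(0)| for all t ≥ 0. -/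
open Matrix Real

private lemma dotProduct_finsum {N : ℕ} {ι : Type*} (a : Fin N → ℝ) (s : Finset ι)
    (f : ι → Fin N → ℝ) : dotProduct a (∑ k ∈ s, f k) = ∑ k ∈ s, dotProduct a (f k) := by
  simp only [dotProduct, Finset.sum_apply, Finset.mul_sum]
  exact Finset.sum_comm

private lemma mulVec_finsum {N : ℕ} {ι : Type*} (M : Matrix (Fin N) (Fin N) ℝ) (s : Finset ι)
    (f : ι → Fin N → ℝ) : M *ᵥ (∑ k ∈ s, f k) = ∑ k ∈ s, M *ᵥ f k := by
  ext i
  simp only [Matrix.mulVec, dotProduct, Finset.sum_apply, Finset.mul_sum]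
  exact Finset.sum_comm

/-- If `B` is symmetric positive definite with square root `B12`, `B_k` are symmetric
positive semidefinite for `k ≥ 2` (here indices `k ≠ 0`), `γ₁ < ... < γ_N`, and
`v' = -γ₁ v + ∑_{k≥2} (γ₁ - γ_k) B_k B v`, then `g t = |B^{1/2} v t|²` satisfies
`g' ≤ -2 γ₁ g` and `|B^{1/2} v t| ≤ e^{-γ₁ t} |B^{1/2} v 0|` for `t ≥ 0`. -/
theorem lyapunov_decay_finite_dim (N : ℕ) (hN : 0 < N)
    (B B12 : Matrix (Fin N) (Fin N) ℝ) (Bk : Fin N → Matrix (Fin N) (Fin N) ℝ)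
    (gam : Fin N → ℝ) (hgam : StrictMono gam)
    (hB : B.PosDef) (hB12 : B12.PosDef) (hB12sq : B12 * B12 = B)
    (hBk : ∀ k : Fin N, k ≠ ⟨0, hN⟩ → (Bk k).PosSemidef)
    (v : ℝ → Fin N → ℝ)
    (hv : ∀ t : ℝ, HasDerivAt v
      (-gam ⟨0, hN⟩ • v t +
        (∑ k ∈ Finset.univ.erase ⟨0, hN⟩,
          (gam ⟨0, hN⟩ - gam k) • ((Bk k * B) *ᵥ v t))) t) :
    (∀ t : ℝ, 0 ≤ t →
      deriv (fun s => dotProduct (B12 *ᵥ v s) (B12 *ᵥ v s)) t ≤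
        -2 * gam ⟨0, hN⟩ * dotProduct (B12 *ᵥ v t) (B12 *ᵥ v t)) ∧
    (∀ t : ℝ, 0 ≤ t →
      Real.sqrt (dotProduct (B12 *ᵥ v t) (B12 *ᵥ v t)) ≤
        Real.exp (-gam ⟨0, hN⟩ * t) * Real.sqrt (dotProduct (B12 *ᵥ v 0) (B12 *ᵥ v 0))) := by
  set γ := gam ⟨0, hN⟩ with hγ
  set V' : ℝ → Fin N → ℝ := fun t => -γ • v t +
      (∑ k ∈ Finset.univ.erase ⟨0, hN⟩,
        (γ - gam k) • ((Bk k * B) *ᵥ v t)) with hV'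
  set g : ℝ → ℝ := fun s => dotProduct (B12 *ᵥ v s) (B12 *ᵥ v s) with hgdef
  have hgnn : ∀ t, 0 ≤ g t := fun t => Finset.sum_nonneg fun i _ => mul_self_nonneg _
  -- symmetry of B12 and B
  have hB12symm : B12ᵀ = B12 := hB12.isHermitian
  have hBsymm : Bᵀ = B := hB.isHermitian
  -- key dot product identity
  have hdot : ∀ a b : Fin N → ℝ, dotProduct (B12 *ᵥ a) (B12 *ᵥ b) = dotProduct a (B *ᵥ b) := by
    intro a b
    rw [Matrix.dotProduct_mulVec, Matrix.vecMul_mulVec, hB12symm, hB12sq,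
      ← hBsymm, Matrix.mulVec_transpose, ← Matrix.dotProduct_mulVec,
      Matrix.mulVec_transpose]
  -- derivative of components of v
  have hvj : ∀ (j : Fin N) (t : ℝ), HasDerivAt (fun s => v s j) (V' t j) t := by
    intro j t
    exact hasDerivAt_pi.mp (hv t) j
  -- derivative of components of B12 *ᵥ v
  have hw : ∀ (i : Fin N) (t : ℝ),
      HasDerivAt (fun s => (B12 *ᵥ v s) i) ((B12 *ᵥ V' t) i) t := by
    intro i t
    have : HasDerivAt (fun s => ∑ j, B12 i j * v s j) (∑ j, B12 i j * V' t j) t :=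
      HasDerivAt.fun_sum fun j _ => (hvj j t).const_mul (B12 i j)
    simpa [Matrix.mulVec, dotProduct] using this
  -- derivative of g
  have hg : ∀ t : ℝ, HasDerivAt g
      (2 * dotProduct (B12 *ᵥ v t) (B12 *ᵥ V' t)) t := by
    intro t
    have h1 : HasDerivAt (fun s => ∑ i, (B12 *ᵥ v s) i * (B12 *ᵥ v s) i)
        (∑ i, ((B12 *ᵥ V' t) i * (B12 *ᵥ v t) i + (B12 *ᵥ v t) i * (B12 *ᵥ V' t) i)) t :=
      HasDerivAt.fun_sum fun i _ => (hw i t).mul (hw i t)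
    have h2 : (∑ i, ((B12 *ᵥ V' t) i * (B12 *ᵥ v t) i + (B12 *ᵥ v t) i * (B12 *ᵥ V' t) i))
        = 2 * dotProduct (B12 *ᵥ v t) (B12 *ᵥ V' t) := by
      simp only [dotProduct, Finset.mul_sum, two_mul, Finset.sum_add_distrib]
      congr 1
      exact Finset.sum_congr rfl fun i _ => mul_comm _ _
    rw [h2] at h1
    exact h1
  -- the key inequality on the derivative
  have hkey : ∀ t : ℝ, 2 * dotProduct (B12 *ᵥ v t) (B12 *ᵥ V' t) ≤ -2 * γ * g t := by
    intro t
    have hexp : dotProduct (B12 *ᵥ v t) (B12 *ᵥ V' t)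
        = -γ * g t + ∑ k ∈ Finset.univ.erase ⟨0, hN⟩,
            (γ - gam k) * dotProduct (B *ᵥ v t) (Bk k *ᵥ (B *ᵥ v t)) := by
      rw [hdot, hV']
      rw [Matrix.mulVec_add, dotProduct_add, Matrix.mulVec_smul, dotProduct_smul,
        mulVec_finsum, dotProduct_finsum]
      congr 1
      · have : dotProduct (v t) (B *ᵥ v t) = g t := (hdot (v t) (v t)).symm
        rw [this]; simp [smul_eq_mul]
      · refine Finset.sum_congr rfl fun k _ => ?_
        rw [Matrix.mulVec_smul, dotProduct_smul, smul_eq_mul]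
        rw [Matrix.dotProduct_mulVec, ← Matrix.mulVec_transpose, hBsymm,
          ← Matrix.mulVec_mulVec]
    rw [hexp]
    have hsum : (∑ k ∈ Finset.univ.erase ⟨0, hN⟩,
        (γ - gam k) * dotProduct (B *ᵥ v t) (Bk k *ᵥ (B *ᵥ v t))) ≤ 0 := by
      refine Finset.sum_nonpos fun k hk => ?_
      have hk0 : k ≠ ⟨0, hN⟩ := Finset.ne_of_mem_erase hk
      have hkv : k.val ≠ 0 := fun h => hk0 (Fin.ext h)
      have hγk : γ < gam k := hgam (by simpa [Fin.lt_def] using Nat.pos_of_ne_zero hkv)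
      have hpos : 0 ≤ dotProduct (B *ᵥ v t) (Bk k *ᵥ (B *ᵥ v t)) := by
        simpa using (hBk k hk0).dotProduct_mulVec_nonneg (B *ᵥ v t)
      exact mul_nonpos_of_nonpos_of_nonneg (by linarith) hpos
    nlinarith [hgnn t]
  constructor
  · intro t _
    calc deriv (fun s => dotProduct (B12 *ᵥ v s) (B12 *ᵥ v s)) t
        = 2 * dotProduct (B12 *ᵥ v t) (B12 *ᵥ V' t) := (hg t).deriv
      _ ≤ -2 * γ * g t := hkey t
  · intro t ht
    -- consider f s = exp (2 γ s) * g s, which is antitone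
    set f : ℝ → ℝ := fun s => Real.exp (2 * γ * s) * g s with hfdef
    have hf : ∀ s, HasDerivAt f
        (2 * γ * Real.exp (2 * γ * s) * g s
          + Real.exp (2 * γ * s) * (2 * dotProduct (B12 *ᵥ v s) (B12 *ᵥ V' s))) s := by
      intro s
      have he0 := ((hasDerivAt_id s).const_mul (2 * γ)).exp
      simp only [id_eq, mul_one] at he0
      have he : HasDerivAt (fun s : ℝ => Real.exp (2 * γ * s))
          (2 * γ * Real.exp (2 * γ * s)) s := by
        convert he0 using 1; ring
      exact he.mul (hg s)
    have hanti : Antitone f := by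
      refine antitone_of_deriv_nonpos (fun s => (hf s).differentiableAt) fun s => ?_
      rw [(hf s).deriv]
      have h1 := hkey s
      have h2 : Real.exp (2 * γ * s) * (2 * dotProduct (B12 *ᵥ v s) (B12 *ᵥ V' s))
          ≤ Real.exp (2 * γ * s) * (-2 * γ * g s) :=
        mul_le_mul_of_nonneg_left h1 (Real.exp_nonneg _)
      nlinarith
    have hft : f t ≤ f 0 := hanti ht
    have hgt : g t ≤ Real.exp (-2 * γ * t) * g 0 := by
      have h0 : f 0 = g 0 := by simp [hfdef]
      have hepos : 0 < Real.exp (2 * γ * t) := Real.exp_pos _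
      have : Real.exp (2 * γ * t) * g t ≤ g 0 := by rw [← h0]; exact hft
      have h3 : Real.exp (-2 * γ * t) = (Real.exp (2 * γ * t))⁻¹ := by
        rw [← Real.exp_neg]; ring_nf
      rw [h3, inv_mul_eq_div, le_div_iff₀ hepos]
      nlinarith [this]
    calc Real.sqrt (g t) ≤ Real.sqrt (Real.exp (-2 * γ * t) * g 0) :=
          Real.sqrt_le_sqrt hgt
      _ = Real.sqrt (Real.exp (-2 * γ * t)) * Real.sqrt (g 0) :=
          Real.sqrt_mul (Real.exp_nonneg _) _
      _ = Real.exp (-γ * t) * Real.sqrt (g 0) := by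
          congr 1
          rw [show -2 * γ * t = (-γ * t) + (-γ * t) by ring, Real.exp_add]
          exact Real.sqrt_mul_self (Real.exp_nonneg _)
end
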